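/- Let X be a real topological vector space whose topology is induced by a complete translation-invariant metric d (a Fréchet space), and let T : X → X be a continuous linear operator. Then the following are equivalent: (i) (X,T) is not equicontinuous; (ii) (X,T) is sensitive for the metric d; (iii) (X,T) is collectively sensitive for the metric d. -/

import Mathlib

open Filter Metric

/-- The system `(Y,g)` is equicontinuous: for every `ε > 0` there is `δ > 0` such that
`d(y,z) < δ` implies `d(gⁿ(y), gⁿ(z)) < ε` for all `n ∈ ℕ`. -/
def EquicontinuousSystem {Y : Type*} [MetricSpace Y] (g : Y → Y) : Prop :=
  ∀ ε > 0, ∃ δ > 0, ∀ y z : Y, dist y z < δ →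
    ∀ n : ℕ, 1 ≤ n → dist (g^[n] y) (g^[n] z) < ε

/-- `(Y,g)` is sensitive (to initial conditions). -/
def Sensitive {Y : Type*} [MetricSpace Y] (g : Y → Y) : Prop :=
  ∃ ε > 0, ∀ y : Y, ∀ δ > 0, ∃ z : Y, ∃ n : ℕ, 1 ≤ n ∧
    dist y z < δ ∧ ε < dist (g^[n] y) (g^[n] z)

/-- `(X,f)` is collectively sensitive. -/
def CollectivelySensitive {X : Type*} [MetricSpace X] (f : X → X) : Prop :=
  ∃ ε > 0, ∀ N : ℕ, 1 ≤ N → ∀ x : Fin N → X, Function.Injective x → ∀ δ > 0,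
    ∃ y : Fin N → X, ∃ n : ℕ, 1 ≤ n ∧ (∀ j, dist (x j) (y j) < δ) ∧
      ∃ j₀ : Fin N, (∀ j, ε < dist (f^[n] (x j₀)) (f^[n] (y j))) ∨
        (∀ j, ε < dist (f^[n] (x j)) (f^[n] (y j₀)))

/-- For a continuous linear operator `T` on a Fréchet space (a real topological vector
space whose topology comes from a complete translation-invariant metric), the following
are equivalent: `(X,T)` is not equicontinuous; `(X,T)` is sensitive; `(X,T)` is
collectively sensitive. -/
theorem not_equicontinuous_iff_sensitive_iff_collectivelySensitive
    {X : Type*} [AddCommGroup X] [Module ℝ X] [MetricSpace X] [CompleteSpace X]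
    [IsTopologicalAddGroup X] [ContinuousSMul ℝ X]
    (hinv : ∀ x y z : X, dist (x + z) (y + z) = dist x y)
    (T : X →L[ℝ] X) :
    (¬ EquicontinuousSystem ⇑T ↔ Sensitive ⇑T) ∧
      (Sensitive ⇑T ↔ CollectivelySensitive ⇑T) := by
  -- translation invariance: distance is a function of the difference
  have dsub : ∀ a b : X, dist a b = dist (a - b) 0 := by
    intro a b
    simpa using hinv (a - b) 0 b
  have dneg : ∀ a : X, dist (-a) 0 = dist a 0 := by
    intro a
    have h := hinv (-a) 0 a
    simp only [neg_add_cancel, zero_add] at h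
    rw [← h, dist_comm]
  -- reverse triangle style inequality
  have tri : ∀ u c : X, dist u 0 - dist c 0 ≤ dist (u - c) 0 := by
    intro u c
    have h1 : dist u (u - c) = dist c 0 := by
      rw [dsub u (u - c)]
      congr 1
      abel
    have h2 := dist_triangle u (u - c) 0
    rw [h1] at h2
    linarith
  -- linearity of iterates
  have itz : ∀ n : ℕ, (⇑T)^[n] (0 : X) = 0 := fun n =>
    Function.iterate_fixed (map_zero T) n
  have itsub : ∀ n : ℕ, ∀ a b : X, (⇑T)^[n] (a - b) = (⇑T)^[n] a - (⇑T)^[n] b := by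
    intro n
    induction n with
    | zero => intro a b; simp
    | succ n ih =>
        intro a b
        rw [Function.iterate_succ_apply', Function.iterate_succ_apply',
          Function.iterate_succ_apply', ih, map_sub]
  have dT : ∀ (n : ℕ) (a b : X),
      dist ((⇑T)^[n] a) ((⇑T)^[n] b) = dist ((⇑T)^[n] (a - b)) 0 := by
    intro n a b
    rw [dsub ((⇑T)^[n] a) ((⇑T)^[n] b), itsub]
  -- (i) → (ii)
  have h1 : ¬ EquicontinuousSystem ⇑T → Sensitive ⇑T := by
    intro hne
    unfold EquicontinuousSystem at hne
    push_neg at hne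
    obtain ⟨ε, hε, H⟩ := hne
    refine ⟨ε / 2, by positivity, ?_⟩
    intro x δ hδ
    obtain ⟨y, z, hyz, n, hn, hd⟩ := H δ hδ
    refine ⟨x + (y - z), n, hn, ?_, ?_⟩
    · have e1 : x - (x + (y - z)) = z - y := by abel
      rw [dsub x (x + (y - z)), e1, ← dsub z y, dist_comm]
      exact hyz
    · have e1 : x - (x + (y - z)) = z - y := by abel
      rw [dT n x (x + (y - z)), e1, ← dT n z y, dist_comm]
      linarith
  -- (ii) → (i)
  have h2 : Sensitive ⇑T → ¬ EquicontinuousSystem ⇑T := by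
    intro hs hE
    obtain ⟨ε, hε, H⟩ := hs
    obtain ⟨δ, hδ, HE⟩ := hE ε hε
    obtain ⟨z, n, hn, hz1, hz2⟩ := H 0 δ hδ
    have := HE 0 z hz1 n hn
    linarith
  -- (ii) → (iii)
  have h3 : Sensitive ⇑T → CollectivelySensitive ⇑T := by
    intro hs
    obtain ⟨ε, hε, H⟩ := hs
    refine ⟨ε / 3, by positivity, ?_⟩
    intro N hN x _hinj δ hδ
    obtain ⟨w, n, hn, hw, hTw⟩ := H 0 δ hδ
    -- hTw : ε < dist ((⇑T)^[n] 0) ((⇑T)^[n] w)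
    have hv : ε < dist ((⇑T)^[n] w) 0 := by
      rw [itz n] at hTw
      rwa [dist_comm] at hTw
    have hw' : dist (0 : X) w < δ := hw
    set j₀ : Fin N := ⟨0, hN⟩ with hj₀
    set y : Fin N → X := fun j =>
      if ε / 3 < dist ((⇑T)^[n] (x j)) ((⇑T)^[n] (x j₀)) then x j else x j + w with hy
    refine ⟨y, n, hn, ?_, j₀, Or.inl ?_⟩
    · intro j
      by_cases h : ε / 3 < dist ((⇑T)^[n] (x j)) ((⇑T)^[n] (x j₀))
      · simp only [hy, if_pos h, dist_self]
        exact hδ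
      · simp only [hy, if_neg h]
        have e1 : x j - (x j + w) = -w := by abel
        rw [dsub (x j) (x j + w), e1, dneg, dist_comm]
        exact hw'
    · intro j
      by_cases h : ε / 3 < dist ((⇑T)^[n] (x j)) ((⇑T)^[n] (x j₀))
      · simp only [hy, if_pos h]
        rwa [dist_comm] at h
      · simp only [hy, if_neg h]
        push_neg at h
        -- distance from Tⁿ x j₀ to Tⁿ (x j + w)
        rw [dT n (x j₀) (x j + w)]
        have e1 : x j₀ - (x j + w) = (x j₀ - x j) - w := by abel
        rw [e1, itsub n (x j₀ - x j) w]
        set c : X := (⇑T)^[n] (x j₀ - x j)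
        set v : X := (⇑T)^[n] w
        have e2 : c - v = -(v - c) := by abel
        rw [e2, dneg]
        have hc : dist c 0 ≤ ε / 3 := by
          have := dT n (x j₀) (x j)
          rw [dist_comm ((⇑T)^[n] (x j₀))] at this
          rw [show dist c 0 = dist ((⇑T)^[n] (x j₀)) ((⇑T)^[n] (x j)) from by
            rw [dT n (x j₀) (x j)]]
          rw [dist_comm]
          exact h
        have := tri v c
        linarith
  -- (iii) → (ii)
  have h4 : CollectivelySensitive ⇑T → Sensitive ⇑T := by
    intro hc
    obtain ⟨ε, hε, H⟩ := hc
    refine ⟨ε, hε, ?_⟩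
    intro p δ hδ
    obtain ⟨y, n, hn, hy, j₀, hcase⟩ :=
      H 1 le_rfl (fun _ => p) (Function.injective_of_subsingleton _) δ hδ
    have hj : j₀ = 0 := Subsingleton.elim _ _
    refine ⟨y 0, n, hn, hy 0, ?_⟩
    rcases hcase with h | h
    · exact h 0
    · have := h 0
      rwa [hj] at this
  exact ⟨⟨h1, h2⟩, ⟨h3, h4⟩⟩
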